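/- Let Δ be a (d-1)-dimensional simplicial complex with h_i ≥ 0 for all 0 ≤ i ≤ d. Then h_i^{sd(Δ)} ≥ h_i^Δ for all 0 ≤ i ≤ d. -/

import Mathlib

open Finset

/-- `Δ` is an (abstract) simplicial complex: a collection of finite subsets of the
vertex set containing the empty face and closed under taking subsets. -/
def IsComplex {α : Type*} (Δ : Finset (Finset α)) : Prop :=
  ∅ ∈ Δ ∧ ∀ s ∈ Δ, ∀ t, t ⊆ s → t ∈ Δ

/-- `Δ` has dimension `d - 1`: every face has at most `d` vertices and some face
has exactly `d` vertices. -/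
def HasDim {α : Type*} (Δ : Finset (Finset α)) (d : ℕ) : Prop :=
  (∀ s ∈ Δ, s.card ≤ d) ∧ ∃ s ∈ Δ, s.card = d

/-- `fnum Δ i = f_{i-1}`, the number of faces of `Δ` with `i` vertices
(i.e. of dimension `i-1`). -/
def fnum {α : Type*} (Δ : Finset (Finset α)) (i : ℕ) : ℕ :=
  (Δ.filter (fun s => s.card = i)).card

/-- The entries of the `h`-vector of a `(d-1)`-dimensional complex:
`h_j = Σ_{i=0}^{j} (-1)^{j-i} binom(d-i, j-i) f_{i-1}`. -/
def hnum {α : Type*} (Δ : Finset (Finset α)) (d j : ℕ) : ℤ :=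
  ∑ i ∈ Finset.range (j + 1),
    (-1 : ℤ) ^ (j - i) * ((d - i).choose (j - i)) * (fnum Δ i : ℤ)

/-- The barycentric subdivision of `Δ`: the simplicial complex whose vertices are
the nonempty faces of `Δ` and whose faces are the chains of nonempty faces. -/
def sd {α : Type*} [DecidableEq α] (Δ : Finset (Finset α)) :
    Finset (Finset (Finset α)) :=
  (Δ.erase ∅).powerset.filter (fun c => ∀ s ∈ c, ∀ t ∈ c, s ⊆ t ∨ t ⊆ s)


/-- restricted Eulerian number via explicit alternating sum -/
def EE (d j r : ℕ) : ℤ :=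
  ∑ u ∈ range (j + 1),
    (-1 : ℤ) ^ (j - u) * ((d + 1).choose (j - u)) * (u : ℤ) ^ r * ((u : ℤ) + 1) ^ (d - r)

lemma EE_zero (d r : ℕ) : EE d 0 r = if r = 0 then 1 else 0 := by
  simp [EE]
  cases r <;> simp

-- geometric telescoping
lemma geom1 (u : ℤ) (d r : ℕ) (h : r ≤ d + 1) :
    ∑ t ∈ range r, u ^ t * (u + 1) ^ (d - t) =
      (u + 1) ^ (d + 1) - u ^ r * (u + 1) ^ (d + 1 - r) := by
  induction r with
  | zero => simp
  | succ n ih =>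
      have hn : n ≤ d := by omega
      rw [sum_range_succ, ih (by omega)]
      have h1 : d + 1 - n = (d - n) + 1 := by omega
      have h2 : d + 1 - (n + 1) = d - n := by omega
      rw [h1, h2, pow_succ, pow_succ]
      ring

lemma geom2 (u : ℤ) (d r : ℕ) (h : r ≤ d + 1) :
    ∑ t ∈ Ico r (d + 1), u ^ t * (u + 1) ^ (d - t) =
      u ^ r * (u + 1) ^ (d + 1 - r) - u ^ (d + 1) := by
  have := geom1 u d (d+1) le_rfl
  have h2 := geom1 u d r h
  have hsplit : ∑ t ∈ range (d+1), u ^ t * (u + 1) ^ (d - t)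
      = (∑ t ∈ range r, u ^ t * (u + 1) ^ (d - t))
        + ∑ t ∈ Ico r (d + 1), u ^ t * (u + 1) ^ (d - t) := by
    rw [← Finset.sum_range_add_sum_Ico _ h]
  rw [hsplit, h2] at this
  simp at this ⊢
  linarith

lemma EE_rec (d j r : ℕ) (hr : r ≤ d + 1) :
    EE (d+1) (j+1) r = (∑ t ∈ range r, EE d j t) + ∑ t ∈ Ico r (d+1), EE d (j+1) t := by
  set T1 : ℤ := ∑ u ∈ range (j+2),
    (-1:ℤ)^(j+1-u) * ((d+1).choose (j+1-u)) * (u:ℤ)^r * ((u:ℤ)+1)^(d+1-r) with hT1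
  set T2 : ℤ := ∑ u ∈ range (j+1),
    (-1:ℤ)^(j-u) * ((d+1).choose (j-u)) * (u:ℤ)^r * ((u:ℤ)+1)^(d+1-r) with hT2
  set S1 : ℤ := ∑ u ∈ range (j+1),
    (-1:ℤ)^(j-u) * ((d+1).choose (j-u)) * ((u:ℤ)+1)^(d+1) with hS1
  set S4 : ℤ := ∑ u ∈ range (j+2),
    (-1:ℤ)^(j+1-u) * ((d+1).choose (j+1-u)) * (u:ℤ)^(d+1) with hS4
  have hA1 : ∑ t ∈ range r, EE d j t = S1 - T2 := by
    unfold EE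
    rw [Finset.sum_comm, ← Finset.sum_sub_distrib]
    refine sum_congr rfl fun u hu => ?_
    have : ∀ t : ℕ, (-1:ℤ)^(j-u) * ((d+1).choose (j-u)) * (u:ℤ)^t * ((u:ℤ)+1)^(d-t)
        = ((-1:ℤ)^(j-u) * ((d+1).choose (j-u))) * ((u:ℤ)^t * ((u:ℤ)+1)^(d-t)) := by
      intro t; ring
    simp_rw [this, ← Finset.mul_sum, geom1 (u:ℤ) d r hr]
    ring
  have hA2 : ∑ t ∈ Ico r (d+1), EE d (j+1) t = T1 - S4 := by
    unfold EE
    rw [Finset.sum_comm, ← Finset.sum_sub_distrib]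
    refine sum_congr rfl fun u hu => ?_
    have : ∀ t : ℕ, (-1:ℤ)^(j+1-u) * ((d+1).choose (j+1-u)) * (u:ℤ)^t * ((u:ℤ)+1)^(d-t)
        = ((-1:ℤ)^(j+1-u) * ((d+1).choose (j+1-u))) * ((u:ℤ)^t * ((u:ℤ)+1)^(d-t)) := by
      intro t; ring
    simp_rw [this, ← Finset.mul_sum, geom2 (u:ℤ) d r hr]
    ring
  have hS14 : S1 = S4 := by
    rw [hS4, Finset.sum_range_succ']
    simp only [Nat.add_sub_cancel, Nat.cast_zero]
    rw [show ((0:ℤ))^(d+1) = 0 by simp]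
    simp only [mul_zero, add_zero]
    refine sum_congr rfl fun u hu => ?_
    have h1 : j + 1 - (u + 1) = j - u := by omega
    rw [h1]
    push_cast
    ring
  have hL : EE (d+1) (j+1) r = T1 - T2 := by
    have peelL := Finset.sum_range_succ
      (fun u => (-1:ℤ)^(j+1-u) * (((d+1+1).choose (j+1-u) : ℤ)) * (u:ℤ)^r * ((u:ℤ)+1)^(d+1-r)) (j+1)
    have peelT := Finset.sum_range_succ
      (fun u => (-1:ℤ)^(j+1-u) * (((d+1).choose (j+1-u) : ℤ)) * (u:ℤ)^r * ((u:ℤ)+1)^(d+1-r)) (j+1)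
    have hlast : j + 1 - (j + 1) = 0 := by omega
    have : ∑ u ∈ range (j+1),
        (-1:ℤ)^(j+1-u) * ((d+1+1).choose (j+1-u)) * (u:ℤ)^r * ((u:ℤ)+1)^(d+1-r)
        = (∑ u ∈ range (j+1),
            (-1:ℤ)^(j+1-u) * ((d+1).choose (j+1-u)) * (u:ℤ)^r * ((u:ℤ)+1)^(d+1-r)) - T2 := by
      rw [hT2, ← Finset.sum_sub_distrib]
      refine sum_congr rfl fun u hu => ?_
      have hu' : u ≤ j := by simpa [Nat.lt_succ_iff] using hu
      have h1 : j + 1 - u = (j - u) + 1 := by omega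
      rw [h1, Nat.choose_succ_succ (d+1) (j-u)]
      push_cast
      ring
    unfold EE
    rw [hT1, peelL, peelT, this, hlast]
    simp only [Nat.choose_zero_right, Nat.cast_one, pow_zero]
    ring
  rw [hL, hA1, hA2, hS14]
  ring

lemma EE_zero00 (j : ℕ) : EE 0 j 0 = if j = 0 then 1 else 0 := by
  cases j with
  | zero => simp [EE]
  | succ m =>
      rw [EE, Finset.sum_range_succ, Finset.sum_range_succ]
      have h1 : m + 1 - (m + 1) = 0 := by omega
      have h2 : m + 1 - m = 1 := by omega
      rw [h1, h2]
      have hz : ∑ u ∈ range m,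
          (-1:ℤ)^(m+1-u) * ((0+1).choose (m+1-u)) * (u:ℤ)^0 * ((u:ℤ)+1)^(0-0) = 0 := by
        apply Finset.sum_eq_zero
        intro u hu
        have : (1).choose (m+1-u) = 0 := by
          apply Nat.choose_eq_zero_of_lt
          simp only [Finset.mem_range] at hu
          omega
        rw [this]
        simp
      rw [hz]
      simp

lemma EE_nonneg (d : ℕ) : ∀ j r, r ≤ d → 0 ≤ EE d j r := by
  induction d with
  | zero =>
      intro j r hr
      interval_cases r
      rw [EE_zero00]
      split <;> norm_num
  | succ n ih =>
      intro j r hr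
      cases j with
      | zero =>
          rw [EE_zero]; split <;> norm_num
      | succ m =>
          rw [EE_rec n m r hr]
          apply add_nonneg
          · apply Finset.sum_nonneg
            intro t ht
            exact ih m t (by simp only [Finset.mem_range] at ht; omega)
          · apply Finset.sum_nonneg
            intro t ht
            exact ih (m+1) t (by simp only [Finset.mem_Ico] at ht; omega)

lemma EE_diag (d : ℕ) : ∀ j, j ≤ d → 1 ≤ EE d j j := by
  induction d with
  | zero =>
      intro j hj
      interval_cases j
      rw [EE_zero00]; norm_num
  | succ n ih =>
      intro j hj
      cases j with
      | zero => rw [EE_zero]; norm_num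
      | succ m =>
          have hm : m ≤ n := by omega
          rw [EE_rec n m (m+1) (by omega)]
          have h1 : 1 ≤ ∑ t ∈ range (m+1), EE n m t := by
            rw [Finset.sum_range_succ]
            have := ih m hm
            have h0 : 0 ≤ ∑ t ∈ range m, EE n m t :=
              Finset.sum_nonneg fun t ht =>
                EE_nonneg n m t (by simp only [Finset.mem_range] at ht; omega)
            linarith
          have h2 : 0 ≤ ∑ t ∈ Ico (m+1) (n+1), EE n (m+1) t :=
            Finset.sum_nonneg fun t ht =>
              EE_nonneg n (m+1) t (by simp only [Finset.mem_Ico] at ht; omega)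
          linarith

lemma sum_alt (n m : ℕ) :
    ∑ v ∈ range (m+1), (-1:ℤ)^v * ((n+1).choose v) = (-1)^m * (n.choose m) := by
  induction m with
  | zero => simp
  | succ m ih =>
      rw [Finset.sum_range_succ, ih, Nat.choose_succ_succ n m]
      push_cast
      ring

lemma lemW (n : ℕ) : ∀ i m, i + m ≤ n →
    ∑ s ∈ range (m+1), (-1:ℤ)^(m-s) * ((n+1).choose (m-s)) * ((i+s).choose s)
      = (-1)^m * ((n-i).choose m) := by
  intro i
  induction i with
  | zero =>
      intro m hm
      have h1 : ∀ s ∈ range (m+1),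
          (-1:ℤ)^(m-s) * ((n+1).choose (m-s)) * ((0+s).choose s)
            = (-1:ℤ)^(m+1-1-s) * ((n+1).choose (m+1-1-s)) := by
        intro s hs
        have : m + 1 - 1 - s = m - s := by omega
        rw [this]
        simp [Nat.choose_self]
      rw [Finset.sum_congr rfl h1,
        Finset.sum_range_reflect (fun v => (-1:ℤ)^v * ((n+1).choose v)) (m+1),
        sum_alt]
      simp
  | succ i ih =>
      intro m
      induction m with
      | zero =>
          intro _
          simp
      | succ m ihm =>
          intro hcond
          rw [Finset.sum_range_succ']
          simp only [Nat.sub_zero, Nat.add_zero, Nat.choose_zero_right, Nat.cast_one, mul_one]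
          have hsplit : ∀ s ∈ range (m+1),
              (-1:ℤ)^(m+1-(s+1)) * ((n+1).choose (m+1-(s+1))) * ((i+1+(s+1)).choose (s+1))
              = (-1:ℤ)^(m-s) * ((n+1).choose (m-s)) * ((i+1+s).choose s)
                + (-1:ℤ)^(m-s) * ((n+1).choose (m-s)) * (((i+(s+1)).choose (s+1))) := by
            intro s hs
            have h1 : m + 1 - (s+1) = m - s := by omega
            have h2 : i + 1 + (s + 1) = (i + 1 + s) + 1 := by omega
            rw [h1, h2, Nat.choose_succ_succ (i+1+s) s]
            have h3 : i + 1 + s = i + (s + 1) := by omega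
            rw [h3]
            push_cast
            ring
          rw [Finset.sum_congr rfl hsplit, Finset.sum_add_distrib, ihm (by omega)]
          have houter := ih (m+1) (by omega)
          rw [Finset.sum_range_succ'] at houter
          have h4 : ∀ s ∈ range (m+1),
              (-1:ℤ)^(m+1-(s+1)) * ((n+1).choose (m+1-(s+1))) * ((i+(s+1)).choose (s+1))
              = (-1:ℤ)^(m-s) * ((n+1).choose (m-s)) * ((i+(s+1)).choose (s+1)) := by
            intro s hs
            have h1 : m + 1 - (s+1) = m - s := by omega
            rw [h1]
          rw [Finset.sum_congr rfl h4] at houter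
          simp only [Nat.sub_zero, Nat.add_zero, Nat.choose_zero_right, Nat.cast_one,
            mul_one] at houter
          have hP : (n - i).choose (m+1) = (n - (i+1)).choose (m+1) + (n - (i+1)).choose m := by
            have h5 : n - i = (n - (i+1)) + 1 := by omega
            rw [h5, Nat.choose_succ_succ]
            simp only [Nat.succ_eq_add_one]
            omega
          have hcast : (((n-i).choose (m+1) : ℤ))
              = ((n-(i+1)).choose (m+1) : ℤ) + ((n-(i+1)).choose m : ℤ) := by
            exact_mod_cast hP
          linear_combination houter + (-1:ℤ)^(m+1) * hcast

/-- the number of surjections from `Fin k` onto `Fin i` -/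
def Surj (k i : ℕ) : ℕ := Fintype.card {f : Fin k → Fin i // Function.Surjective f}

lemma card_surjections (A B : Type*) [Fintype A] [DecidableEq A] [Fintype B] [DecidableEq B] :
    Fintype.card {f : A → B // Function.Surjective f}
      = Surj (Fintype.card A) (Fintype.card B) := by
  apply Fintype.card_congr
  refine (Equiv.arrowCongr (Fintype.equivFin A) (Fintype.equivFin B)).subtypeEquiv fun f => ?_
  constructor
  · intro h y
    obtain ⟨x, hx⟩ := h ((Fintype.equivFin B).symm y)
    refine ⟨Fintype.equivFin A x, ?_⟩
    simp [Equiv.arrowCongr, hx]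
  · intro h y
    obtain ⟨x, hx⟩ := h (Fintype.equivFin B y)
    refine ⟨(Fintype.equivFin A).symm x, ?_⟩
    simpa [Equiv.arrowCongr] using congrArg (Fintype.equivFin B).symm hx

lemma pow_eq_sum_surj (u k : ℕ) :
    u ^ k = ∑ i ∈ range (u+1), (u.choose i) * Surj k i := by
  classical
  have h0 : u ^ k = Fintype.card (Fin k → Fin u) := by
    rw [Fintype.card_fun]
    simp
  have hmaps : ∀ f : Fin k → Fin u, f ∈ (univ : Finset (Fin k → Fin u)) →
      (univ : Finset (Fin k)).image f ∈ (univ : Finset (Fin u)).powerset := by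
    intro f _
    simp [Finset.mem_powerset]
  have h1 : (univ : Finset (Fin k → Fin u)).card =
      ∑ S ∈ (univ : Finset (Fin u)).powerset,
        ((univ : Finset (Fin k → Fin u)).filter
          (fun f => (univ : Finset (Fin k)).image f = S)).card :=
    Finset.card_eq_sum_card_fiberwise hmaps
  have hfiber : ∀ S ∈ (univ : Finset (Fin u)).powerset,
      ((univ : Finset (Fin k → Fin u)).filter
        (fun f => (univ : Finset (Fin k)).image f = S)).card = Surj k S.card := by
    intro S _
    have : ((univ : Finset (Fin k → Fin u)).filter
        (fun f => (univ : Finset (Fin k)).image f = S)).card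
        = Fintype.card {f : Fin k → Fin u // (univ : Finset (Fin k)).image f = S} := by
      rw [Fintype.card_subtype]
    rw [this]
    have hequiv : {f : Fin k → Fin u // (univ : Finset (Fin k)).image f = S}
        ≃ {g : Fin k → ↥S // Function.Surjective g} := by
      refine ⟨fun ⟨f, hf⟩ => ⟨fun x => ⟨f x, ?_⟩, ?_⟩,
              fun ⟨g, hg⟩ => ⟨fun x => ↑(g x), ?_⟩, ?_, ?_⟩
      · rw [← hf]; exact Finset.mem_image_of_mem f (Finset.mem_univ x)
      · rintro ⟨y, hy⟩
        rw [← hf] at hy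
        obtain ⟨x, _, hx⟩ := Finset.mem_image.1 hy
        exact ⟨x, Subtype.ext hx⟩
      · apply Finset.Subset.antisymm
        · intro y hy
          obtain ⟨x, _, hx⟩ := Finset.mem_image.1 hy
          rw [← hx]; exact (g x).2
        · intro y hy
          obtain ⟨x, hx⟩ := hg ⟨y, hy⟩
          exact Finset.mem_image.2 ⟨x, Finset.mem_univ x, by rw [hx]⟩
      · rintro ⟨f, hf⟩; rfl
      · rintro ⟨g, hg⟩; rfl
    rw [Fintype.card_congr hequiv, card_surjections]
    congr 1
    · simp
    · exact Fintype.card_coe S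
  rw [h0, ← Finset.card_univ, h1, Finset.sum_congr rfl hfiber,
    Finset.sum_powerset_apply_card (fun m => Surj k m)]
  simp [smul_eq_mul]

lemma coefLR (d j k : ℕ) (hj : j ≤ d) :
    ∑ u ∈ range (j+1), (-1:ℤ)^(j-u) * ((d+1).choose (j-u)) * (u:ℤ)^k
      = ∑ i ∈ range (j+1), (-1:ℤ)^(j-i) * ((d-i).choose (j-i)) * (Surj k i : ℤ) := by
  have hexp : ∀ u ∈ range (j+1),
      (-1:ℤ)^(j-u) * ((d+1).choose (j-u)) * (u:ℤ)^k
        = ∑ i ∈ range (j+1),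
            (-1:ℤ)^(j-u) * ((d+1).choose (j-u)) * ((u.choose i : ℤ) * (Surj k i : ℤ)) := by
    intro u hu
    simp only [Finset.mem_range, Nat.lt_succ_iff] at hu
    have hpow : (u:ℤ)^k = ∑ i ∈ range (j+1), (u.choose i : ℤ) * (Surj k i : ℤ) := by
      have := pow_eq_sum_surj u k
      have hz : ∑ i ∈ range (j+1), (u.choose i : ℤ) * (Surj k i : ℤ)
          = ∑ i ∈ range (u+1), (u.choose i : ℤ) * (Surj k i : ℤ) := by
        symm
        apply Finset.sum_subset
        · intro x hx
          simp only [Finset.mem_range] at hx ⊢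
          omega
        · intro x _ hx
          simp only [Finset.mem_range, not_lt] at hx
          have : u.choose x = 0 := Nat.choose_eq_zero_of_lt (by omega)
          rw [this]
          simp
      rw [hz]
      exact_mod_cast this
    rw [hpow, Finset.mul_sum]
  rw [Finset.sum_congr rfl hexp, Finset.sum_comm]
  refine Finset.sum_congr rfl fun i hi => ?_
  simp only [Finset.mem_range, Nat.lt_succ_iff] at hi
  have hrestrict : ∑ u ∈ range (j+1),
      (-1:ℤ)^(j-u) * ((d+1).choose (j-u)) * ((u.choose i : ℤ) * (Surj k i : ℤ))
      = ∑ u ∈ Ico i (j+1),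
      (-1:ℤ)^(j-u) * ((d+1).choose (j-u)) * ((u.choose i : ℤ) * (Surj k i : ℤ)) := by
    symm
    apply Finset.sum_subset
    · intro x hx
      simp only [Finset.mem_Ico] at hx
      simp only [Finset.mem_range]
      omega
    · intro x hx hx'
      simp only [Finset.mem_range] at hx
      simp only [Finset.mem_Ico, not_and, not_le] at hx'
      have : x.choose i = 0 := Nat.choose_eq_zero_of_lt (by omega)
      rw [this]
      simp
  rw [hrestrict, Finset.sum_Ico_eq_sum_range]
  have hlen : j + 1 - i = (j - i) + 1 := by omega
  rw [hlen]
  have hterm : ∀ s ∈ range ((j-i)+1),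
      (-1:ℤ)^(j-(i+s)) * ((d+1).choose (j-(i+s))) * (((i+s).choose i : ℤ) * (Surj k i : ℤ))
      = ((-1:ℤ)^((j-i)-s) * ((d+1).choose ((j-i)-s)) * (((i+s).choose s : ℤ))) * (Surj k i : ℤ) := by
    intro s hs
    simp only [Finset.mem_range, Nat.lt_succ_iff] at hs
    have h1 : j - (i+s) = (j-i) - s := by omega
    have h2 : (i+s).choose i = (i+s).choose s := Nat.choose_symm_add
    rw [h1, h2]
    ring
  rw [Finset.sum_congr rfl hterm, ← Finset.sum_mul, lemW d i (j-i) (by omega)]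

section Comb
variable {α : Type*} [DecidableEq α]

lemma mem_sd_iff {Δ : Finset (Finset α)} {c : Finset (Finset α)} :
    c ∈ sd Δ ↔ (∀ s ∈ c, s ∈ Δ ∧ s ≠ ∅) ∧ (∀ s ∈ c, ∀ s' ∈ c, s ⊆ s' ∨ s' ⊆ s) := by
  simp only [sd, Finset.mem_filter, Finset.mem_powerset]
  constructor
  · rintro ⟨h1, h2⟩
    refine ⟨fun s hs => ?_, h2⟩
    have := h1 hs
    rw [Finset.mem_erase] at this
    exact ⟨this.2, this.1⟩
  · rintro ⟨h1, h2⟩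
    refine ⟨fun s hs => ?_, h2⟩
    rw [Finset.mem_erase]
    exact ⟨(h1 s hs).2, (h1 s hs).1⟩

lemma chain_sup_mem (c : Finset (Finset α))
    (hchain : ∀ s ∈ c, ∀ s' ∈ c, s ⊆ s' ∨ s' ⊆ s) (hne : c.Nonempty) :
    c.sup id ∈ c := by
  induction c using Finset.induction with
  | empty => exact absurd hne (by simp)
  | @insert a c ha ih =>
      rw [Finset.sup_insert]
      rcases Finset.eq_empty_or_nonempty c with hc | hc
      · subst hc; simp
      · have hm : c.sup id ∈ c := ih (fun s hs s' hs' =>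
          hchain s (Finset.mem_insert_of_mem hs) s' (Finset.mem_insert_of_mem hs')) hc
        rcases hchain a (Finset.mem_insert_self a c) (c.sup id) (Finset.mem_insert_of_mem hm)
          with h | h
        · have : (id a) ⊔ c.sup id = c.sup id := sup_eq_right.2 h
          rw [this]
          exact Finset.mem_insert_of_mem hm
        · have : (id a) ⊔ c.sup id = a := sup_eq_left.2 h
          rw [this]
          exact Finset.mem_insert_self a c

lemma sd_sup_mem {Δ : Finset (Finset α)} (hΔ : IsComplex Δ) {c : Finset (Finset α)}
    (hc : c ∈ sd Δ) : c.sup id ∈ Δ := by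
  rw [mem_sd_iff] at hc
  rcases Finset.eq_empty_or_nonempty c with h | h
  · subst h; simpa using hΔ.1
  · exact (hc.1 _ (chain_sup_mem c hc.2 h)).1

end Comb

section Fiber
variable {α : Type*} [DecidableEq α]

/-- the `l`-th level set of a function `f : t → Fin i`, as a subset of `t` -/
def sl (t : Finset α) {i : ℕ} (f : {x // x ∈ t} → Fin i) (l : Fin i) : Finset α :=
  (t.attach.filter (fun x => f x ≤ l)).image Subtype.val

lemma mem_sl {t : Finset α} {i : ℕ} {f : {x // x ∈ t} → Fin i} {l : Fin i} {a : α} :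
    a ∈ sl t f l ↔ ∃ h : a ∈ t, f ⟨a, h⟩ ≤ l := by
  simp only [sl, Finset.mem_image, Finset.mem_filter, Finset.mem_attach, true_and]
  constructor
  · rintro ⟨⟨y, hy⟩, hfy, rfl⟩
    exact ⟨hy, hfy⟩
  · rintro ⟨h, hf⟩
    exact ⟨⟨a, h⟩, hf, rfl⟩

lemma sl_subset {t : Finset α} {i : ℕ} {f : {x // x ∈ t} → Fin i} {l : Fin i} :
    sl t f l ⊆ t := by
  intro a ha
  exact (mem_sl.1 ha).1

lemma sl_mono {t : Finset α} {i : ℕ} {f : {x // x ∈ t} → Fin i} {l l' : Fin i}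
    (h : l ≤ l') : sl t f l ⊆ sl t f l' := by
  intro a ha
  obtain ⟨hat, hfl⟩ := mem_sl.1 ha
  exact mem_sl.2 ⟨hat, le_trans hfl h⟩

lemma sl_injective {t : Finset α} {i : ℕ} {f : {x // x ∈ t} → Fin i}
    (hf : Function.Surjective f) : Function.Injective (sl t f) := by
  intro l l' h
  by_contra hne
  rcases lt_trichotomy l l' with hlt | heq | hlt
  · obtain ⟨x, hx⟩ := hf l'
    have : (x : α) ∈ sl t f l' := mem_sl.2 ⟨x.2, by rw [Subtype.coe_eta, hx]⟩
    rw [← h] at this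
    obtain ⟨_, hle⟩ := mem_sl.1 this
    rw [Subtype.coe_eta, hx] at hle
    exact absurd hle (not_le.2 hlt)
  · exact hne heq
  · obtain ⟨x, hx⟩ := hf l
    have : (x : α) ∈ sl t f l := mem_sl.2 ⟨x.2, by rw [Subtype.coe_eta, hx]⟩
    rw [h] at this
    obtain ⟨_, hle⟩ := mem_sl.1 this
    rw [Subtype.coe_eta, hx] at hle
    exact absurd hle (not_le.2 hlt)

lemma count_lt {t : Finset α} {c : Finset (Finset α)} {i : ℕ} (hcard : c.card = i)
    (hsup : c.sup id = t) {x : α} (hx : x ∈ t) :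
    (c.filter (fun s => x ∉ s)).card < i := by
  rw [← hsup, Finset.mem_sup] at hx
  obtain ⟨s₀, hs₀c, hs₀⟩ := hx
  have hss : c.filter (fun s => x ∉ s) ⊂ c := by
    refine (Finset.ssubset_iff_of_subset (Finset.filter_subset _ _)).2 ⟨s₀, hs₀c, ?_⟩
    simp only [Finset.mem_filter, not_and, not_not]
    intro _
    exact hs₀
  calc (c.filter (fun s => x ∉ s)).card < c.card := Finset.card_lt_card hss
    _ = i := hcard

lemma fiber_card {Δ : Finset (Finset α)} (hΔ : IsComplex Δ) {t : Finset α} (ht : t ∈ Δ)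
    (i : ℕ) :
    ((sd Δ).filter (fun c => c.card = i ∧ c.sup id = t)).card = Surj t.card i := by
  classical
  have hSurj : Surj t.card i
      = ((univ : Finset ({x // x ∈ t} → Fin i)).filter
          (fun f => Function.Surjective f)).card := by
    rw [← Fintype.card_subtype, card_surjections]
    congr 1
    · exact (Fintype.card_coe t).symm
    · exact (Fintype.card_fin i).symm
  rw [hSurj]
  refine Finset.card_bij'
    (i := fun c hc => fun x : {x // x ∈ t} =>
      (⟨(c.filter (fun s => (x : α) ∉ s)).card,
        count_lt (Finset.mem_filter.1 hc).2.1 (Finset.mem_filter.1 hc).2.2 x.2⟩ : Fin i))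
    (j := fun f _ => (univ : Finset (Fin i)).image (sl t f))
    ?_ ?_ ?_ ?_
  · -- forward map lands in surjective functions
    intro c hc
    rw [Finset.mem_filter] at hc
    obtain ⟨hsd, hcard, hsup⟩ := hc
    rw [mem_sd_iff] at hsd
    obtain ⟨hfaces, hchain⟩ := hsd
    rw [Finset.mem_filter]
    refine ⟨Finset.mem_univ _, ?_⟩
    -- surjectivity
    intro l
    -- the rank function
    set ρ : Finset α → ℕ := fun s => (c.filter (fun s' => s' ⊂ s)).card with hρ
    have hρlt : ∀ s ∈ c, ρ s < i := by
      intro s hs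
      have : c.filter (fun s' => s' ⊂ s) ⊂ c := by
        refine (Finset.ssubset_iff_of_subset (Finset.filter_subset _ _)).2 ⟨s, hs, ?_⟩
        simp only [Finset.mem_filter, not_and]
        exact fun _ => ssubset_irrefl s
      calc ρ s < c.card := Finset.card_lt_card this
        _ = i := hcard
    have hρmono : ∀ s ∈ c, ∀ s' ∈ c, s ⊂ s' → ρ s < ρ s' := by
      intro s hs s' hs' hss
      have hsub : insert s (c.filter (fun s'' => s'' ⊂ s)) ⊆ c.filter (fun s'' => s'' ⊂ s') := by
        intro s'' hs''
        rcases Finset.mem_insert.1 hs'' with rfl | h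
        · exact Finset.mem_filter.2 ⟨hs, hss⟩
        · rw [Finset.mem_filter] at h ⊢
          exact ⟨h.1, h.2.trans hss⟩
      have h1 : (insert s (c.filter (fun s'' => s'' ⊂ s))).card = ρ s + 1 := by
        rw [Finset.card_insert_of_notMem]
        simp only [Finset.mem_filter, not_and]
        exact fun _ => ssubset_irrefl s
      calc ρ s < ρ s + 1 := Nat.lt_succ_self _
        _ = _ := h1.symm
        _ ≤ ρ s' := Finset.card_le_card hsub
    have hρinj : Set.InjOn ρ c := by
      intro s hs s' hs' h
      by_contra hne
      rcases hchain s hs s' hs' with hsub | hsub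
      · have : s ⊂ s' := Finset.ssubset_iff_subset_ne.2 ⟨hsub, hne⟩
        exact absurd h (Nat.ne_of_lt (hρmono s hs s' hs' this))
      · have : s' ⊂ s := Finset.ssubset_iff_subset_ne.2 ⟨hsub, Ne.symm hne⟩
        exact absurd h.symm (Nat.ne_of_lt (hρmono s' hs' s hs this))
    have himage : c.image ρ = Finset.range i := by
      apply Finset.eq_of_subset_of_card_le
      · intro x hx
        obtain ⟨s, hs, rfl⟩ := Finset.mem_image.1 hx
        exact Finset.mem_range.2 (hρlt s hs)
      · rw [Finset.card_range, Finset.card_image_of_injOn hρinj, hcard]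
    -- obtain s with ρ s = l
    have hl : (l : ℕ) ∈ c.image ρ := by
      rw [himage]
      exact Finset.mem_range.2 l.2
    obtain ⟨s, hs, hρs⟩ := Finset.mem_image.1 hl
    -- find x realizing the count
    have hst : s ⊆ t := by
      rw [← hsup]
      exact Finset.le_sup (f := id) hs
    set B := c.filter (fun s' => s' ⊂ s) with hB
    rcases Finset.eq_empty_or_nonempty B with hBe | hBne
    · -- B empty : pick any x ∈ s
      obtain ⟨x, hxs⟩ := Finset.nonempty_iff_ne_empty.2 (hfaces s hs).2
      refine ⟨⟨x, hst hxs⟩, ?_⟩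
      have hcount : c.filter (fun s' => x ∉ s') = ∅ := by
        rw [Finset.eq_empty_iff_forall_notMem]
        intro s'' hs''
        rw [Finset.mem_filter] at hs''
        obtain ⟨hs''c, hxs''⟩ := hs''
        rcases hchain s hs s'' hs''c with hsub | hsub
        · exact hxs'' (hsub hxs)
        · have : s'' ⊂ s := Finset.ssubset_iff_subset_ne.2
            ⟨hsub, by rintro rfl; exact hxs'' hxs⟩
          have : s'' ∈ B := Finset.mem_filter.2 ⟨hs''c, this⟩
          rw [hBe] at this
          exact absurd this (Finset.notMem_empty _)
      apply Fin.ext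
      simp only []
      rw [hcount]
      have : ρ s = 0 := by
        rw [hρ]
        simp only []
        rw [← hB, hBe]
        rfl
      rw [← hρs, this]
      rfl
    · -- B nonempty : x ∈ s \ max B
      have hBchain : ∀ s' ∈ B, ∀ s'' ∈ B, s' ⊆ s'' ∨ s'' ⊆ s' := by
        intro s' hs' s'' hs''
        exact hchain s' (Finset.filter_subset _ _ hs') s'' (Finset.filter_subset _ _ hs'')
      have hm : B.sup id ∈ B := chain_sup_mem B hBchain hBne
      have hms : B.sup id ⊂ s := (Finset.mem_filter.1 hm).2
      obtain ⟨x, hxs, hxm⟩ := Finset.exists_of_ssubset hms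
      refine ⟨⟨x, hst hxs⟩, ?_⟩
      have hcount : c.filter (fun s' => x ∉ s') = B := by
        apply Finset.Subset.antisymm
        · intro s'' hs''
          rw [Finset.mem_filter] at hs''
          obtain ⟨hs''c, hxs''⟩ := hs''
          rcases hchain s hs s'' hs''c with hsub | hsub
          · exact absurd (hsub hxs) hxs''
          · exact Finset.mem_filter.2 ⟨hs''c, Finset.ssubset_iff_subset_ne.2
              ⟨hsub, by rintro rfl; exact hxs'' hxs⟩⟩
        · intro s'' hs''
          have hsub : s'' ⊆ B.sup id := Finset.le_sup (f := id) hs''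
          exact Finset.mem_filter.2 ⟨(Finset.mem_filter.1 hs'').1,
            fun hx' => hxm (hsub hx')⟩
      apply Fin.ext
      simp only []
      rw [hcount, ← hρs]
  · -- backward map lands in the fiber
    intro f hf
    rw [Finset.mem_filter] at hf
    have hfs : Function.Surjective f := hf.2
    rw [Finset.mem_filter]
    have hcardim : ((univ : Finset (Fin i)).image (sl t f)).card = i := by
      rw [Finset.card_image_of_injective _ (sl_injective hfs), Finset.card_univ,
        Fintype.card_fin]
    have hsup : ((univ : Finset (Fin i)).image (sl t f)).sup id = t := by
      apply Finset.Subset.antisymm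
      · intro x hx
        rw [Finset.mem_sup] at hx
        obtain ⟨s, hsmem, hxs⟩ := hx
        obtain ⟨l, _, rfl⟩ := Finset.mem_image.1 hsmem
        exact sl_subset hxs
      · intro x hx
        rw [Finset.mem_sup]
        exact ⟨sl t f (f ⟨x, hx⟩), Finset.mem_image_of_mem _ (Finset.mem_univ _),
          mem_sl.2 ⟨hx, le_refl _⟩⟩
    refine ⟨?_, hcardim, hsup⟩
    rw [mem_sd_iff]
    constructor
    · intro s hsmem
      obtain ⟨l, _, rfl⟩ := Finset.mem_image.1 hsmem
      constructor
      · exact hΔ.2 t ht _ sl_subset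
      · obtain ⟨x, hx⟩ := hfs l
        have : (x : α) ∈ sl t f l := mem_sl.2 ⟨x.2, by rw [Subtype.coe_eta, hx]⟩
        exact Finset.ne_empty_of_mem this
    · intro s hsmem s' hsmem'
      obtain ⟨l, _, rfl⟩ := Finset.mem_image.1 hsmem
      obtain ⟨l', _, rfl⟩ := Finset.mem_image.1 hsmem'
      rcases le_total l l' with h | h
      · exact Or.inl (sl_mono h)
      · exact Or.inr (sl_mono h)
  · -- left inverse : chains
    intro c hc
    rw [Finset.mem_filter] at hc
    obtain ⟨hsd, hcard, hsup⟩ := hc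
    rw [mem_sd_iff] at hsd
    obtain ⟨hfaces, hchain⟩ := hsd
    set g : {x // x ∈ t} → Fin i := fun x =>
      (⟨(c.filter (fun s => (x : α) ∉ s)).card,
        count_lt hcard hsup x.2⟩ : Fin i) with hg
    symm
    apply Finset.eq_of_subset_of_card_le
    · -- c ⊆ image of levels
      intro s hs
      have hst : s ⊆ t := by
        rw [← hsup]
        exact Finset.le_sup (f := id) hs
      have hρlt : (c.filter (fun s' => s' ⊂ s)).card < i := by
        have : c.filter (fun s' => s' ⊂ s) ⊂ c := by
          refine (Finset.ssubset_iff_of_subset (Finset.filter_subset _ _)).2 ⟨s, hs, ?_⟩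
          simp only [Finset.mem_filter, not_and]
          exact fun _ => ssubset_irrefl s
        calc _ < c.card := Finset.card_lt_card this
          _ = i := hcard
      rw [Finset.mem_image]
      refine ⟨⟨(c.filter (fun s' => s' ⊂ s)).card, hρlt⟩, Finset.mem_univ _, ?_⟩
      -- the level set at rank ρ s equals s
      ext x
      rw [mem_sl]
      constructor
      · rintro ⟨hxt, hle⟩
        simp only [hg] at hle
        rw [Fin.mk_le_mk] at hle
        by_contra hxs
        have hsub : insert s (c.filter (fun s' => s' ⊂ s))
            ⊆ c.filter (fun s' => x ∉ s') := by
          intro s'' hs''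
          rcases Finset.mem_insert.1 hs'' with rfl | h
          · exact Finset.mem_filter.2 ⟨hs, hxs⟩
          · rw [Finset.mem_filter] at h ⊢
            refine ⟨h.1, fun hx' => hxs (h.2.subset hx')⟩
        have h1 : (insert s (c.filter (fun s' => s' ⊂ s))).card
            = (c.filter (fun s' => s' ⊂ s)).card + 1 := by
          rw [Finset.card_insert_of_notMem]
          simp only [Finset.mem_filter, not_and]
          exact fun _ => ssubset_irrefl s
        have := Finset.card_le_card hsub
        rw [h1] at this
        omega
      · intro hxs
        refine ⟨hst hxs, ?_⟩
        simp only [hg]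
        rw [Fin.mk_le_mk]
        apply Finset.card_le_card
        intro s'' hs''
        rw [Finset.mem_filter] at hs'' ⊢
        obtain ⟨hs''c, hxs''⟩ := hs''
        rcases hchain s hs s'' hs''c with hsub | hsub
        · exact absurd (hsub hxs) hxs''
        · exact ⟨hs''c, Finset.ssubset_iff_subset_ne.2
            ⟨hsub, by rintro rfl; exact hxs'' hxs⟩⟩
    · -- card bound
      calc ((univ : Finset (Fin i)).image (sl t g)).card
          ≤ (univ : Finset (Fin i)).card := Finset.card_image_le
        _ = i := by rw [Finset.card_univ, Fintype.card_fin]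
        _ = c.card := hcard.symm
  · -- right inverse : functions
    intro f hf
    rw [Finset.mem_filter] at hf
    have hfs : Function.Surjective f := hf.2
    funext x
    apply Fin.ext
    simp only []
    have himgfilter : ((univ : Finset (Fin i)).image (sl t f)).filter
        (fun s => (x : α) ∉ s)
        = ((univ : Finset (Fin i)).filter (fun l => (x : α) ∉ sl t f l)).image (sl t f) := by
      rw [Finset.filter_image]
    rw [himgfilter, Finset.card_image_of_injective _ (sl_injective hfs)]
    have hfilter : (univ : Finset (Fin i)).filter (fun l => (x : α) ∉ sl t f l)
        = (univ : Finset (Fin i)).filter (fun l => l < f x) := by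
      apply Finset.filter_congr
      intro l _
      simp only [mem_sl, not_exists]
      constructor
      · intro h
        by_contra hnot
        rw [not_lt] at hnot
        exact h x.2 (by rw [Subtype.coe_eta]; exact hnot)
      · intro h hx hle
        rw [Subtype.coe_eta] at hle
        exact absurd (lt_of_le_of_lt hle h) (lt_irrefl _)
    rw [hfilter]
    have : (univ : Finset (Fin i)).filter (fun l => l < f x) = Finset.Iio (f x) := by
      ext l; simp
    rw [this, Fin.card_Iio]
end Fiber

lemma triangle_swap {M : Type*} [AddCommMonoid M] (n : ℕ) (F : ℕ → ℕ → M) :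
    ∑ r ∈ range (n+1), ∑ i ∈ range (r+1), F r i
      = ∑ i ∈ range (n+1), ∑ r ∈ Ico i (n+1), F r i := by
  simp_rw [Finset.sum_sigma']
  refine Finset.sum_nbij' (fun p => ⟨p.2, p.1⟩) (fun p => ⟨p.2, p.1⟩)
    (fun p hp => ?_) (fun p hp => ?_) (fun p hp => rfl) (fun p hp => rfl) (fun p hp => rfl)
  · simp only [Finset.mem_sigma, Finset.mem_range, Finset.mem_Ico, Nat.lt_succ_iff] at hp ⊢
    omega
  · simp only [Finset.mem_sigma, Finset.mem_range, Finset.mem_Ico, Nat.lt_succ_iff] at hp ⊢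
    omega

section Main
variable {α : Type*} [DecidableEq α]

lemma fnum_sd {Δ : Finset (Finset α)} (hΔ : IsComplex Δ) {d : ℕ}
    (hdim : ∀ s ∈ Δ, s.card ≤ d) (i : ℕ) :
    fnum (sd Δ) i = ∑ k ∈ range (d+1), fnum Δ k * Surj k i := by
  have h1 : fnum (sd Δ) i = ∑ t ∈ Δ, Surj t.card i := by
    rw [fnum]
    rw [Finset.card_eq_sum_card_fiberwise
      (f := fun c => c.sup id) (t := Δ)
      (fun c hc => sd_sup_mem hΔ (Finset.mem_filter.1 hc).1)]
    refine Finset.sum_congr rfl fun t htΔ => ?_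
    rw [Finset.filter_filter]
    exact fiber_card hΔ htΔ i
  rw [h1]
  rw [← Finset.sum_fiberwise_of_maps_to (g := fun t : Finset α => t.card)
    (fun t htΔ => Finset.mem_range.2 (Nat.lt_succ_of_le (hdim t htΔ)))
    (fun t => Surj t.card i)]
  refine Finset.sum_congr rfl fun k _ => ?_
  have : ∀ t ∈ Δ.filter (fun t => t.card = k), Surj t.card i = Surj k i := by
    intro t htm
    rw [(Finset.mem_filter.1 htm).2]
  rw [Finset.sum_congr rfl this, Finset.sum_const, fnum, smul_eq_mul]

lemma hsum_collapse (Δ : Finset (Finset α)) (d : ℕ) (u : ℕ) :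
    ∑ r ∈ range (d+1), (u:ℤ)^r * ((u:ℤ)+1)^(d-r) * hnum Δ d r
      = ∑ k ∈ range (d+1), (fnum Δ k : ℤ) * (u:ℤ)^k := by
  unfold hnum
  have hexp : ∀ r ∈ range (d+1),
      (u:ℤ)^r * ((u:ℤ)+1)^(d-r) * (∑ i ∈ range (r+1),
        (-1:ℤ)^(r-i) * ((d-i).choose (r-i)) * (fnum Δ i : ℤ))
      = ∑ i ∈ range (r+1),
          (u:ℤ)^r * ((u:ℤ)+1)^(d-r) * ((-1:ℤ)^(r-i) * ((d-i).choose (r-i)) * (fnum Δ i : ℤ)) := by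
    intro r _
    rw [Finset.mul_sum]
  rw [Finset.sum_congr rfl hexp, triangle_swap]
  refine Finset.sum_congr rfl fun i hi => ?_
  simp only [Finset.mem_range, Nat.lt_succ_iff] at hi
  rw [Finset.sum_Ico_eq_sum_range]
  have hlen : d + 1 - i = (d - i) + 1 := by omega
  rw [hlen]
  have hterm : ∀ s ∈ range ((d-i)+1),
      (u:ℤ)^(i+s) * ((u:ℤ)+1)^(d-(i+s)) * ((-1:ℤ)^((i+s)-i) * ((d-i).choose ((i+s)-i)) * (fnum Δ i : ℤ))
      = ((fnum Δ i : ℤ) * (u:ℤ)^i) * (((d-i).choose s : ℤ) * (-(u:ℤ))^s * ((u:ℤ)+1)^((d-i)-s)) := by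
    intro s hs
    simp only [Finset.mem_range, Nat.lt_succ_iff] at hs
    have h1 : i + s - i = s := by omega
    have h2 : d - (i+s) = (d-i) - s := by omega
    rw [h1, h2, pow_add, neg_pow]
    ring
  rw [Finset.sum_congr rfl hterm, ← Finset.mul_sum]
  have hbin : ∑ s ∈ range ((d-i)+1),
      ((d-i).choose s : ℤ) * (-(u:ℤ))^s * ((u:ℤ)+1)^((d-i)-s) = 1 := by
    have h := add_pow (-(u:ℤ)) ((u:ℤ)+1) (d-i)
    rw [show (-(u:ℤ) + ((u:ℤ)+1)) = 1 by ring, one_pow] at h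
    calc ∑ s ∈ range ((d-i)+1), ((d-i).choose s : ℤ) * (-(u:ℤ))^s * ((u:ℤ)+1)^((d-i)-s)
        = ∑ s ∈ range ((d-i)+1), (-(u:ℤ))^s * ((u:ℤ)+1)^((d-i)-s) * ((d-i).choose s : ℤ) :=
          Finset.sum_congr rfl fun s _ => by ring
      _ = 1 := h.symm
  rw [hbin, mul_one]
end Main

section Main2
variable {α : Type*} [DecidableEq α]

lemma hnum_sd {Δ : Finset (Finset α)} (hΔ : IsComplex Δ) {d : ℕ}
    (hdim : ∀ s ∈ Δ, s.card ≤ d) {j : ℕ} (hj : j ≤ d) :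
    hnum (sd Δ) d j = ∑ r ∈ range (d+1), EE d j r * hnum Δ d r := by
  have hL : hnum (sd Δ) d j = ∑ k ∈ range (d+1), (fnum Δ k : ℤ) *
      ∑ u ∈ range (j+1), (-1:ℤ)^(j-u) * ((d+1).choose (j-u)) * (u:ℤ)^k := by
    unfold hnum
    have h1 : ∀ i ∈ range (j+1),
        (-1:ℤ)^(j-i) * ((d-i).choose (j-i)) * (fnum (sd Δ) i : ℤ)
        = ∑ k ∈ range (d+1), (fnum Δ k : ℤ) *
            ((-1:ℤ)^(j-i) * ((d-i).choose (j-i)) * (Surj k i : ℤ)) := by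
      intro i _
      rw [fnum_sd hΔ hdim i]
      push_cast
      rw [Finset.mul_sum]
      refine Finset.sum_congr rfl fun k _ => by ring
    rw [Finset.sum_congr rfl h1, Finset.sum_comm]
    refine Finset.sum_congr rfl fun k _ => ?_
    rw [← Finset.mul_sum, ← coefLR d j k hj]
  have hR : ∑ r ∈ range (d+1), EE d j r * hnum Δ d r
      = ∑ k ∈ range (d+1), (fnum Δ k : ℤ) *
          ∑ u ∈ range (j+1), (-1:ℤ)^(j-u) * ((d+1).choose (j-u)) * (u:ℤ)^k := by
    unfold EE
    have h1 : ∀ r ∈ range (d+1),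
        (∑ u ∈ range (j+1),
          (-1:ℤ)^(j-u) * ((d+1).choose (j-u)) * (u:ℤ)^r * ((u:ℤ)+1)^(d-r)) * hnum Δ d r
        = ∑ u ∈ range (j+1), (-1:ℤ)^(j-u) * ((d+1).choose (j-u)) *
            ((u:ℤ)^r * ((u:ℤ)+1)^(d-r) * hnum Δ d r) := by
      intro r _
      rw [Finset.sum_mul]
      exact Finset.sum_congr rfl fun u _ => by ring
    rw [Finset.sum_congr rfl h1, Finset.sum_comm]
    have h2 : ∀ u ∈ range (j+1),
        ∑ r ∈ range (d+1), (-1:ℤ)^(j-u) * ((d+1).choose (j-u)) *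
          ((u:ℤ)^r * ((u:ℤ)+1)^(d-r) * hnum Δ d r)
        = ∑ k ∈ range (d+1), (fnum Δ k : ℤ) *
            ((-1:ℤ)^(j-u) * ((d+1).choose (j-u)) * (u:ℤ)^k) := by
      intro u _
      rw [← Finset.mul_sum, hsum_collapse Δ d u, Finset.mul_sum]
      exact Finset.sum_congr rfl fun k _ => by ring
    rw [Finset.sum_congr rfl h2, Finset.sum_comm]
    exact Finset.sum_congr rfl fun k _ => by rw [Finset.mul_sum]
  rw [hL, hR]

theorem hvector_sd_monotone' {Δ : Finset (Finset α)}
    (d : ℕ) (hΔ : IsComplex Δ) (hdim : HasDim Δ d)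
    (hpos : ∀ i ≤ d, 0 ≤ hnum Δ d i) :
    ∀ i ≤ d, hnum Δ d i ≤ hnum (sd Δ) d i := by
  intro i hi
  rw [hnum_sd hΔ hdim.1 hi]
  have hmem : i ∈ range (d+1) := Finset.mem_range.2 (Nat.lt_succ_of_le hi)
  rw [← Finset.sum_erase_add _ _ hmem]
  have h1 : 0 ≤ ∑ r ∈ (range (d+1)).erase i, EE d i r * hnum Δ d r := by
    apply Finset.sum_nonneg
    intro r hr
    have hr' : r ≤ d := by
      have := Finset.mem_of_mem_erase hr
      simp only [Finset.mem_range] at this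
      omega
    exact mul_nonneg (EE_nonneg d i r hr') (hpos r hr')
  have h2 : hnum Δ d i ≤ EE d i i * hnum Δ d i :=
    le_mul_of_one_le_left (hpos i hi) (EE_diag d i hi)
  linarith
end Main2

/-- If the `h`-vector of a `(d-1)`-dimensional simplicial complex is nonnegative,
then the `h`-vector of its barycentric subdivision dominates it entrywise. -/
theorem hvector_sd_monotone {α : Type*} [DecidableEq α] (Δ : Finset (Finset α))
    (d : ℕ) (hΔ : IsComplex Δ) (hdim : HasDim Δ d)
    (hpos : ∀ i ≤ d, 0 ≤ hnum Δ d i) :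
    ∀ i ≤ d, hnum Δ d i ≤ hnum (sd Δ) d i := by
  exact hvector_sd_monotone' d hΔ hdim hpos
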